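/- In the VPG construction setup: let u, v ∈ V(T) be such that u is an internal vertex and v is a leaf. Then (a) l_y(v) ∉ [l_y(u), r_y(u)]; and (b) l_x(v) ∈ [l_x(u), r_x(u)] if and only if u is an ancestor of v. -/

import Mathlib

open SimpleGraph Set Function

/-- `u` is an ancestor of `v` with respect to root `r`:
`u` lies on the unique path in `T` from `r` to `v`. -/
def IsAncestor {V : Type*} (T : SimpleGraph V) (r u v : V) : Prop :=
  ∀ p : T.Walk r v, p.IsPath → u ∈ p.support

/-- `u` is the parent of `v` with respect to root `r`. -/
def IsParent {V : Type*} (T : SimpleGraph V) (r u v : V) : Prop :=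
  IsAncestor T r u v ∧ u ≠ v ∧ T.Adj u v

/-- `L^r(u)`: the set of leaves of `T` that are descendants of `u`. -/
def LeafSet {V : Type*} (T : SimpleGraph V) [Fintype V] [DecidableRel T.Adj] (r u : V) :
    Set V :=
  {c | T.degree c = 1 ∧ IsAncestor T r u c}

/-- The leaf `c_{j mod k}` index. -/
def cidx {k : ℕ} (hk : 0 < k) (j : ℕ) : Fin k := ⟨j % k, Nat.mod_lt _ hk⟩

/-- A set `A` of leaves is cyclically consecutive with respect to the enumeration `c`. -/
def CycConsec {V : Type*} {k : ℕ} (hk : 0 < k) (c : Fin k → V) (A : Set V) : Prop :=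
  ∃ j m : ℕ, A = {x | ∃ t ≤ m, x = c (cidx hk (j + t))}

lemma aux_internal_dist {V : Type*} [Fintype V] (T : SimpleGraph V) [DecidableRel T.Adj]
    (hT : T.IsTree) (r' : V) (h : ℕ)
    (hmax : IsGreatest (Set.range fun u : V => T.dist r' u) h)
    (u : V) (hu : 2 ≤ T.degree u) : T.dist r' u + 1 ≤ h := by
  classical
  have hub : ∀ x : V, T.dist r' x ≤ h := fun x => hmax.2 ⟨x, rfl⟩
  by_cases hur : u = r'
  · subst hur
    obtain ⟨w, hw⟩ := (T.degree_pos_iff_exists_adj u).1 (by omega)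
    have h1 : T.dist u w ≠ 0 := fun h0 =>
      hw.ne ((hT.isConnected.dist_eq_zero_iff).mp h0)
    have h2 := hub w
    have h3 : T.dist u u = 0 := by simp
    omega
  · obtain ⟨W, hWlen⟩ := hT.isConnected.exists_walk_length_eq_dist u r'
    set p := W.bypass with hp_def
    have hp : p.IsPath := W.bypass_isPath
    have hplen : p.length = T.dist u r' :=
      le_antisymm (hWlen ▸ W.length_bypass_le) (dist_le p)
    obtain ⟨z, hadj, q, hpq⟩ := Walk.exists_eq_cons_of_ne hur p
    -- any neighbor w with dist r' w ≤ dist r' u equals z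
    have key : ∀ w : V, T.Adj u w → T.dist r' w ≤ T.dist r' u → w = z := by
      intro w hadjw hdw
      obtain ⟨W', hW'len⟩ := hT.isConnected.exists_walk_length_eq_dist w r'
      set q' := W'.bypass with hq'_def
      have hq' : q'.IsPath := W'.bypass_isPath
      have hq'len : q'.length = T.dist w r' :=
        le_antisymm (hW'len ▸ W'.length_bypass_le) (dist_le q')
      by_cases hmem : u ∈ q'.support
      · exfalso
        have hspec := q'.take_spec hmem
        have hlen : (q'.takeUntil u hmem).length + (q'.dropUntil u hmem).length
            = q'.length := by
          conv_rhs => rw [← hspec]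
          rw [Walk.length_append]
        have h1 : T.dist u r' ≤ (q'.dropUntil u hmem).length := dist_le _
        have h2 : T.dist w r' ≤ T.dist u r' := by
          rw [T.dist_comm (u := w) (v := r'), T.dist_comm (u := u) (v := r')]
          exact hdw
        have h0 : (q'.takeUntil u hmem).length = 0 := by omega
        exact hadjw.ne' (Walk.eq_of_length_eq_zero h0)
      · have hc : (Walk.cons hadjw q').IsPath := hq'.cons hmem
        have heq : Walk.cons hadjw q' = p :=
          (hT.existsUnique_path u r').unique hc hp
        have : (Walk.cons hadjw q').getVert 1 = p.getVert 1 := by rw [heq]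
        rwa [Walk.getVert_cons_succ, hpq, Walk.getVert_cons_succ, Walk.getVert_zero,
          Walk.getVert_zero] at this
    have hcard : 1 < (T.neighborFinset u).card := by
      rwa [T.card_neighborFinset_eq_degree]
    obtain ⟨w, hwmem, hwz⟩ := Finset.exists_mem_ne hcard z
    have hadjw : T.Adj u w := (T.mem_neighborFinset u w).1 hwmem
    have : ¬ (T.dist r' w ≤ T.dist r' u) := fun hle => hwz (key w hadjw hle)
    have := hub w
    omega

/-- properties of the L-shapes of an internal vertex and a leaf. -/
theorem stmt8
    {V : Type*} [Fintype V] (T : SimpleGraph V) [DecidableRel T.Adj]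
    (hT : T.IsTree) {k : ℕ} (hk : 3 ≤ k) (b : Fin k → V)
    (hinj : Function.Injective b)
    (hleaf : ∀ v : V, T.degree v = 1 ↔ ∃ i : Fin k, v = b i)
    (r' : V) (hr' : 2 ≤ T.degree r')
    (hconsec : ∀ u : V, 2 ≤ T.degree u → ∃ s t : Fin k, s ≤ t ∧
        LeafSet T r' u = {x | ∃ j : Fin k, s ≤ j ∧ j ≤ t ∧ x = b j})
    (hpath0 : ∀ p : T.Walk (b ⟨0, by omega⟩) r', p.IsPath →
        ∀ w ∈ p.support, w ≠ b ⟨0, by omega⟩ → w ≠ r' → ∃ z : V, LeafSet T r' w = {z})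
    (hpath1 : ∀ p : T.Walk (b ⟨1, by omega⟩) r', p.IsPath →
        ∀ w ∈ p.support, w ≠ b ⟨1, by omega⟩ → w ≠ r' → ∃ z : V, LeafSet T r' w = {z})
    (h : ℕ) (hmax : IsGreatest (Set.range fun u : V => T.dist r' u) h)
    (lx rx ly ry : V → ℝ)
    (hb0 : lx (b ⟨0, by omega⟩) = 1.5 ∧ rx (b ⟨0, by omega⟩) = (k : ℝ) - 1 ∧
      ly (b ⟨0, by omega⟩) = 0 ∧
      ry (b ⟨0, by omega⟩) = (h : ℝ) - (T.dist r' (b ⟨0, by omega⟩) : ℝ) + 2)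
    (hb1 : lx (b ⟨1, by omega⟩) = 1 ∧ rx (b ⟨1, by omega⟩) = 2 ∧
      ly (b ⟨1, by omega⟩) = 1 ∧
      ry (b ⟨1, by omega⟩) = (h : ℝ) - (T.dist r' (b ⟨1, by omega⟩) : ℝ) + 2)
    (hbk : lx (b ⟨k - 1, by omega⟩) = (k : ℝ) - 1 ∧ rx (b ⟨k - 1, by omega⟩) = (k : ℝ) ∧
      ly (b ⟨k - 1, by omega⟩) = 0 ∧
      ry (b ⟨k - 1, by omega⟩) = (h : ℝ) - (T.dist r' (b ⟨k - 1, by omega⟩) : ℝ) + 2)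
    (hbi : ∀ i : Fin k, 2 ≤ (i : ℕ) → (i : ℕ) ≤ k - 2 →
      lx (b i) = ((i : ℕ) : ℝ) ∧ rx (b i) = ((i : ℕ) : ℝ) + 1 ∧ ly (b i) = 1 ∧
      ry (b i) = (h : ℝ) - (T.dist r' (b i) : ℝ) + 2)
    (hintv : ∀ v : V, 2 ≤ T.degree v →
      lx v = sInf (lx '' LeafSet T r' v) ∧ rx v = sSup (lx '' LeafSet T r' v) ∧
      ly v = (h : ℝ) - (T.dist r' v : ℝ) + 1 ∧ ry v = (h : ℝ) - (T.dist r' v : ℝ) + 2)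
    :
    ∀ u v : V, 2 ≤ T.degree u → T.degree v = 1 →
      (ly v ∉ Set.Icc (ly u) (ry u)) ∧
      (lx v ∈ Set.Icc (lx u) (rx u) ↔ IsAncestor T r' u v) := by
  classical
  intro u v hu hv
  obtain ⟨i, rfl⟩ := (hleaf v).1 hv
  have hd1 : T.dist r' u + 1 ≤ h := aux_internal_dist T hT r' h hmax u hu
  obtain ⟨hlxu, hrxu, hlyu, hryu⟩ := hintv u hu
  have hdeg : ∀ j : Fin k, T.degree (b j) = 1 := fun j => (hleaf _).2 ⟨j, rfl⟩
  -- values of lx on leaves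
  have hlxval : ∀ j : Fin k, lx (b j) =
      if (j : ℕ) = 0 then 1.5 else if (j : ℕ) = 1 then 1 else ((j : ℕ) : ℝ) := by
    intro j
    by_cases hj0 : (j : ℕ) = 0
    · have hje : j = ⟨0, by omega⟩ := Fin.ext hj0
      rw [hje, hb0.1]; norm_num
    · by_cases hj1 : (j : ℕ) = 1
      · have hje : j = ⟨1, by omega⟩ := Fin.ext hj1
        rw [hje, hb1.1]; norm_num
      · rw [if_neg hj0, if_neg hj1]
        by_cases hjk : (j : ℕ) = k - 1
        · have hje : j = ⟨k - 1, by omega⟩ := Fin.ext hjk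
          rw [hje, hbk.1]
          have hv' : ((⟨k - 1, by omega⟩ : Fin k) : ℕ) = k - 1 := rfl
          rw [hv', Nat.cast_sub (by omega), Nat.cast_one]
        · exact (hbi j (by omega) (by omega)).1
  -- ly on leaves at most 1
  have hlyval : ly (b i) ≤ 1 := by
    by_cases hj0 : (i : ℕ) = 0
    · have hje : i = ⟨0, by omega⟩ := Fin.ext hj0
      rw [hje, hb0.2.2.1]; norm_num
    · by_cases hj1 : (i : ℕ) = 1
      · have hje : i = ⟨1, by omega⟩ := Fin.ext hj1
        rw [hje, hb1.2.2.1]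
      · by_cases hjk : (i : ℕ) = k - 1
        · have hje : i = ⟨k - 1, by omega⟩ := Fin.ext hjk
          rw [hje, hbk.2.2.1]; norm_num
        · rw [(hbi i (by omega) (by omega)).2.2.1]
  constructor
  -- part (a)
  · intro hmem
    rw [Set.mem_Icc] at hmem
    have hcast : (T.dist r' u : ℝ) ≤ (h : ℝ) - 1 := by
      have : (T.dist r' u : ℝ) + 1 ≤ (h : ℝ) := by exact_mod_cast hd1
      linarith
    rw [hlyu] at hmem
    linarith [hmem.1, hlyval]
  -- part (b)
  · have hmem_iff : ∀ x : V, T.degree x = 1 → (x ∈ (LeafSet T r' u) ↔ IsAncestor T r' u x) :=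
      fun x hx => ⟨fun hh => hh.2, fun hh => ⟨hx, hh⟩⟩
    refine Iff.trans ?_ (hmem_iff _ (hdeg i))
    obtain ⟨s, t, hst, hL⟩ := hconsec u hu
    have hbs : b s ∈ (LeafSet T r' u) := by rw [hL]; exact ⟨s, le_refl s, hst, rfl⟩
    have hbt : b t ∈ (LeafSet T r' u) := by rw [hL]; exact ⟨t, hst, le_refl t, rfl⟩
    have hfin : (lx '' (LeafSet T r' u)).Finite := (Set.toFinite (LeafSet T r' u)).image lx
    have hbddb : BddBelow (lx '' (LeafSet T r' u)) := hfin.bddBelow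
    have hbdda : BddAbove (lx '' (LeafSet T r' u)) := hfin.bddAbove
    have hfwd : b i ∈ (LeafSet T r' u) → lx (b i) ∈ Set.Icc (lx u) (rx u) := by
      intro hmem
      rw [Set.mem_Icc, hlxu, hrxu]
      exact ⟨csInf_le hbddb ⟨_, hmem, rfl⟩, le_csSup hbdda ⟨_, hmem, rfl⟩⟩
    -- injectivity of lx on leaves
    have hlxinj : ∀ a c : Fin k, lx (b a) = lx (b c) → a = c := by
      intro a c he
      rw [hlxval, hlxval] at he
      have h2a : ¬((a:ℕ) = 0) → ¬((a:ℕ) = 1) → (2:ℝ) ≤ ((a:ℕ):ℝ) := by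
        intro h1 h2; exact_mod_cast by omega
      have h2c : ¬((c:ℕ) = 0) → ¬((c:ℕ) = 1) → (2:ℝ) ≤ ((c:ℕ):ℝ) := by
        intro h1 h2; exact_mod_cast by omega
      apply Fin.ext
      split_ifs at he with p1 p2 p3 p4 p5 p6 <;>
        first
          | omega
          | exact_mod_cast he
          | (exfalso; norm_num at he; done)
          | (exfalso; specialize h2c (by assumption) (by assumption);
             norm_num at he; (try linarith); omega)
          | (exfalso; specialize h2a (by assumption) (by assumption);
             norm_num at he; (try linarith); omega)
          | (exfalso; specialize h2c (by assumption) (by assumption);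
             norm_num at he; linarith)
          | (exfalso; specialize h2a (by assumption) (by assumption);
             norm_num at he; linarith)
    -- helper for singleton case
    have hsingle : ∀ jj : Fin k, (LeafSet T r' u) = {b jj} →
        (lx (b i) ∈ Set.Icc (lx u) (rx u) ↔ b i ∈ (LeafSet T r' u)) := by
      intro jj hLs
      rw [hlxu, hrxu, hLs, Set.image_singleton, csInf_singleton, csSup_singleton,
        Set.mem_Icc, Set.mem_singleton_iff]
      constructor
      · rintro ⟨h1, h2⟩
        have : i = jj := hlxinj i jj (le_antisymm h2 h1)
        rw [this]
      · intro he
        rw [hinj he]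
        exact ⟨le_refl _, le_refl _⟩
    by_cases hur : u = r'
    · -- u = r': every leaf is a descendant
      have hall : b i ∈ (LeafSet T r' u) := ⟨hdeg i, by
        subst hur; intro p hp; exact p.start_mem_support⟩
      exact iff_of_true (hfwd hall) hall
    · have hunotleaf : ∀ j : Fin k, u ≠ b j := by
        intro j he
        have := hdeg j
        rw [← he] at this
        omega
      -- singleton subcases from hpath0/hpath1
      have hsingleton_from_path :
          ∀ (j0 : Fin k), s = j0 →
          (∀ p : T.Walk (b j0) r', p.IsPath →
            ∀ w ∈ p.support, w ≠ b j0 → w ≠ r' → ∃ z : V, LeafSet T r' w = {z}) →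
          (LeafSet T r' u) = {b s} := by
        intro j0 hs0 hp0
        subst hs0
        have hanc : IsAncestor T r' u (b s) := hbs.2
        obtain ⟨W⟩ := (hT.isConnected (b s) r')
        have hp : W.bypass.IsPath := W.bypass_isPath
        have hup : u ∈ W.bypass.support := by
          have := hanc W.bypass.reverse (hp.reverse)
          rwa [Walk.support_reverse, List.mem_reverse] at this
        obtain ⟨z, hz⟩ := hp0 W.bypass hp u hup (hunotleaf s) hur
        rw [hz] at hbs hbt
        have hts : t = s := hinj (hbt.trans hbs.symm)
        rw [hL]
        ext x
        simp only [Set.mem_setOf_eq, Set.mem_singleton_iff]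
        constructor
        · rintro ⟨j, hj1, hj2, rfl⟩
          rw [hts] at hj2
          rw [le_antisymm hj2 hj1]
        · intro hx
          exact ⟨s, le_refl s, hts ▸ le_refl s, hx⟩
      by_cases hs0 : (s : ℕ) = 0
      · exact (hsingle s (hsingleton_from_path ⟨0, by omega⟩ (Fin.ext hs0) hpath0)).trans
          (Iff.rfl)
      · by_cases hs1 : (s : ℕ) = 1
        · exact (hsingle s (hsingleton_from_path ⟨1, by omega⟩ (Fin.ext hs1) hpath1)).trans
            (Iff.rfl)
        · -- s ≥ 2: sInf = s, sSup = t
          have hs2 : 2 ≤ (s : ℕ) := by omega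
          have hlx_in_L : ∀ x ∈ (LeafSet T r' u), ∃ j : Fin k, s ≤ j ∧ j ≤ t ∧ x = b j := by
            intro x hx; rw [hL] at hx; exact hx
          have hval : ∀ j : Fin k, s ≤ j → lx (b j) = ((j : ℕ) : ℝ) := by
            intro j hj
            have : (s : ℕ) ≤ (j : ℕ) := hj
            rw [hlxval, if_neg (by omega), if_neg (by omega)]
          have hInf : sInf (lx '' (LeafSet T r' u)) = ((s : ℕ) : ℝ) := by
            apply le_antisymm
            · exact csInf_le hbddb ⟨b s, hbs, hval s (le_refl s)⟩
            · refine le_csInf ⟨lx (b s), ⟨b s, hbs, rfl⟩⟩ ?_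
              rintro x ⟨y, hy, rfl⟩
              obtain ⟨j, hj1, hj2, rfl⟩ := hlx_in_L y hy
              rw [hval j hj1]
              exact_mod_cast hj1
          have hSup : sSup (lx '' (LeafSet T r' u)) = ((t : ℕ) : ℝ) := by
            apply le_antisymm
            · refine csSup_le ⟨lx (b s), ⟨b s, hbs, rfl⟩⟩ ?_
              rintro x ⟨y, hy, rfl⟩
              obtain ⟨j, hj1, hj2, rfl⟩ := hlx_in_L y hy
              rw [hval j hj1]
              exact_mod_cast hj2
            · exact le_csSup hbdda ⟨b t, hbt, hval t hst⟩
          have hmemL_iff : b i ∈ (LeafSet T r' u) ↔ ((s : ℕ) ≤ (i : ℕ) ∧ (i : ℕ) ≤ (t : ℕ)) := by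
            rw [hL]
            constructor
            · rintro ⟨j, hj1, hj2, he⟩
              have : i = j := hinj he
              subst this
              exact ⟨hj1, hj2⟩
            · rintro ⟨h1, h2⟩
              exact ⟨i, h1, h2, rfl⟩
          rw [hmemL_iff, Set.mem_Icc, hlxu, hrxu, hInf, hSup, hlxval]
          by_cases hi0 : (i : ℕ) = 0
          · rw [if_pos hi0]
            constructor
            · rintro ⟨h1, h2⟩
              exfalso
              have : (2:ℝ) ≤ ((s:ℕ):ℝ) := by exact_mod_cast hs2
              norm_num at h1
              linarith
            · rintro ⟨h1, h2⟩; omega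
          · rw [if_neg hi0]
            by_cases hi1 : (i : ℕ) = 1
            · rw [if_pos hi1]
              constructor
              · rintro ⟨h1, h2⟩
                exfalso
                have : (2:ℝ) ≤ ((s:ℕ):ℝ) := by exact_mod_cast hs2
                linarith
              · rintro ⟨h1, h2⟩; omega
            · rw [if_neg hi1]
              constructor
              · rintro ⟨h1, h2⟩
                exact ⟨by exact_mod_cast h1, by exact_mod_cast h2⟩
              · rintro ⟨h1, h2⟩
                exact ⟨by exact_mod_cast h1, by exact_mod_cast h2⟩
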